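/- The classical Hasse square is both a pullback and a pushout: the sequence of abelian groups 0 → ℤ → ℚ × ∏_p ℤ_p → ℚ ⊗_ℤ (∏_p ℤ_p) → 0 is exact, where the product is over all prime numbers p, ℤ_p denotes the ring of p-adic integers, the first map sends n to (n, (n)_p), and the second map sends (q, (a_p)) to q ⊗ 1 − ι((a_p)), with ι : ∏_p ℤ_p → ℚ ⊗_ℤ ∏_p ℤ_p the canonical map a ↦ 1 ⊗ a. -/

import Mathlib

open scoped TensorProduct

/-- The product of the rings of `p`-adic integers over all primes `p`. -/
abbrev HasseProd : Type := ∀ p : Nat.Primes, @PadicInt p.1 ⟨p.2⟩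

/-- First map of the Hasse square sequence: `n ↦ ((n : ℚ), (n)_p)`. -/
noncomputable def hasseF : ℤ → ℚ × HasseProd :=
  fun n => ((n : ℚ), fun _ => (n : _))

/-- Second map of the Hasse square sequence: `(q, a) ↦ q ⊗ 1 - 1 ⊗ a`. -/
noncomputable def hasseG : ℚ × HasseProd → ℚ ⊗[ℤ] HasseProd :=
  fun x => x.1 ⊗ₜ[ℤ] (1 : HasseProd) - (1 : ℚ) ⊗ₜ[ℤ] x.2

/-- The classical Hasse square is both a pullback and a pushout:
`0 → ℤ → ℚ × ∏_p ℤ_p → ℚ ⊗ ∏_p ℤ_p → 0` is exact. -/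

noncomputable def hasseι : HasseProd →ₗ[ℤ] ℚ ⊗[ℤ] HasseProd := TensorProduct.mk ℤ ℚ HasseProd 1

instance : IsLocalizedModule (nonZeroDivisors ℤ) hasseι :=
  (isLocalizedModule_iff_isBaseChange (nonZeroDivisors ℤ) ℚ hasseι).mpr
    (TensorProduct.isBaseChange ℤ HasseProd ℚ)

lemma hasseι_apply (b : HasseProd) : hasseι b = (1 : ℚ) ⊗ₜ[ℤ] b := rfl

lemma hasseι_injective : Function.Injective hasseι := by
  rw [injective_iff_map_eq_zero]
  intro b hb
  have h0 : IsLocalizedModule.mk' hasseι b (1 : nonZeroDivisors ℤ) = 0 := by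
    rw [IsLocalizedModule.mk'_one]; exact hb
  obtain ⟨s, hs⟩ := (IsLocalizedModule.mk'_eq_zero' _ _).mp h0
  funext p
  haveI : Fact p.1.Prime := ⟨p.2⟩
  have hsp : (s : ℤ) • b p = 0 := congrFun hs p
  have hsne : ((s : ℤ) : @PadicInt p.1 ⟨p.2⟩) ≠ 0 := by
    have := mem_nonZeroDivisors_iff_ne_zero.mp s.2
    exact_mod_cast Int.cast_injective.ne this
  rw [zsmul_eq_mul] at hsp
  have := mul_eq_zero.mp hsp
  tauto

lemma smul_injective_tensor (s : ℤ) (hs : s ≠ 0) :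
    Function.Injective (fun x : ℚ ⊗[ℤ] HasseProd => s • x) := by
  intro x y h
  have hx : ((s : ℚ)) • x = ((s : ℚ)) • y := by
    rw [Int.cast_smul_eq_zsmul, Int.cast_smul_eq_zsmul]; exact h
  have hs' : (s : ℚ) ≠ 0 := by exact_mod_cast hs
  calc x = (s : ℚ)⁻¹ • ((s : ℚ) • x) := (inv_smul_smul₀ hs' x).symm
    _ = (s : ℚ)⁻¹ • ((s : ℚ) • y) := by rw [hx]
    _ = y := inv_smul_smul₀ hs' y

/-- CRT helper: for any `b ∈ ∏ ℤ_p` and nonzero `n : ℕ`, there is an integer `m`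
congruent to `b p` mod `n` in every `ℤ_p`. -/
lemma hasse_crt (n : ℕ) (hn : n ≠ 0) (b : HasseProd) :
    ∃ m : ℕ, ∀ p : Nat.Primes, ((n : @PadicInt p.1 ⟨p.2⟩)) ∣ (m : _) - b p := by
  classical
  set s : ℕ → ℕ := fun q => q ^ n.factorization q with hs
  set a : ℕ → ℕ := fun q =>
    if h : q.Prime then @PadicInt.appr q ⟨h⟩ (b ⟨q, h⟩) (n.factorization q) else 0 with ha
  have hs0 : ∀ q ∈ n.primeFactors, s q ≠ 0 := fun q hq =>
    pow_ne_zero _ (Nat.Prime.ne_zero (Nat.prime_of_mem_primeFactors hq))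
  have hpp : Set.Pairwise (n.primeFactors : Finset ℕ) (Function.onFun Nat.Coprime s) := by
    intro q hq r hr hqr
    exact Nat.Coprime.pow _ _ ((Nat.coprime_primes (Nat.prime_of_mem_primeFactors (by simpa using hq))
      (Nat.prime_of_mem_primeFactors (by simpa using hr))).mpr hqr)
  obtain ⟨m, hm⟩ := Nat.chineseRemainderOfFinset a s n.primeFactors hs0 hpp
  refine ⟨m, fun p => ?_⟩
  haveI : Fact p.1.Prime := ⟨p.2⟩
  set e := n.factorization p.1 with he
  -- step 1 : (p^e : ℤ_p) ∣ m - b p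
  have h1 : ((p.1 : @PadicInt p.1 ⟨p.2⟩)) ^ e ∣ (m : _) - b p := by
    by_cases hp : p.1 ∈ n.primeFactors
    · have hmod : (m : ℕ) ≡ a p.1 [MOD s p.1] := hm p.1 hp
      have hdvd : ((p.1 : ℤ) ^ e) ∣ ((m : ℤ) - (a p.1 : ℤ)) := by
        have := (Nat.modEq_iff_dvd (n := s p.1) (a := a p.1) (b := m)).mp hmod.symm
        simpa [hs, he, push_cast] using this
      obtain ⟨c, hc⟩ := hdvd
      have happr : ((p.1 : @PadicInt p.1 ⟨p.2⟩)) ^ e ∣ (b p - (a p.1 : _)) := by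
        have := @PadicInt.appr_spec p.1 ⟨p.2⟩ e (b p)
        rw [Ideal.mem_span_singleton] at this
        have hap : (a p.1 : @PadicInt p.1 ⟨p.2⟩) = (@PadicInt.appr p.1 ⟨p.2⟩ (b p) e : _) := by
          simp only [ha]
          rw [dif_pos p.2]
          rfl
        rw [hap]
        exact this
      have h2 : ((p.1 : @PadicInt p.1 ⟨p.2⟩)) ^ e ∣ ((m : _) - (a p.1 : _)) := by
        refine ⟨(c : _), ?_⟩
        have := congrArg (fun z : ℤ => (z : @PadicInt p.1 ⟨p.2⟩)) hc
        push_cast at this ⊢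
        simpa using this
      have := dvd_sub h2 happr
      simpa using this
    · have hnd : ¬ p.1 ∣ n := fun hd => hp (Nat.mem_primeFactors.mpr ⟨p.2, hd, hn⟩)
      have : e = 0 := Nat.factorization_eq_zero_of_not_dvd hnd
      rw [this, pow_zero]
      exact one_dvd _
  -- step 2 : the unit part
  obtain ⟨c, hc⟩ := h1
  have hu : IsUnit ((n / p.1 ^ e : ℕ) : @PadicInt p.1 ⟨p.2⟩) := by
    rw [PadicInt.isUnit_iff]
    have h1 : ‖((n / p.1 ^ e : ℕ) : @PadicInt p.1 ⟨p.2⟩)‖ ≤ 1 := PadicInt.norm_le_one _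
    have h2 : ¬ ‖((n / p.1 ^ e : ℕ) : @PadicInt p.1 ⟨p.2⟩)‖ < 1 := by
      rw [show ((n / p.1 ^ e : ℕ) : @PadicInt p.1 ⟨p.2⟩) = (((n / p.1 ^ e : ℕ) : ℤ) : _) from (Int.cast_natCast _).symm,
        PadicInt.norm_int_lt_one_iff_dvd]
      intro hdvd
      have : p.1 ∣ n / p.1 ^ e := by exact_mod_cast hdvd
      exact Nat.not_dvd_ordCompl p.2 hn this
    linarith
  obtain ⟨d, hd⟩ := (hu.dvd : _ ∣ c)
  refine ⟨d, ?_⟩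
  have hne : (n : @PadicInt p.1 ⟨p.2⟩) = (p.1 : _) ^ e * ((n / p.1 ^ e : ℕ) : _) := by
    rw [← Nat.cast_pow, ← Nat.cast_mul, Nat.ordProj_mul_ordCompl_eq_self]
  rw [hc, hd, hne]
  ring

lemma hasseG_eq (q : ℚ) (a : HasseProd) :
    hasseG (q, a) = q ⊗ₜ[ℤ] (1 : HasseProd) - (1 : ℚ) ⊗ₜ[ℤ] a := rfl

-- key smul computations
lemma smul_tmul_one (c : ℤ) (q : ℚ) :
    c • (q ⊗ₜ[ℤ] (1 : HasseProd)) = (c • q) ⊗ₜ[ℤ] (1 : HasseProd) := by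
  rw [TensorProduct.smul_tmul']

lemma cast_tmul_one (c : ℤ) :
    ((c : ℚ)) ⊗ₜ[ℤ] (1 : HasseProd) = (1 : ℚ) ⊗ₜ[ℤ] (c • (1 : HasseProd)) := by
  rw [← TensorProduct.smul_tmul]
  norm_num

theorem hasse_exact_mid : Function.Exact hasseF hasseG := by
  intro y
  obtain ⟨q, a⟩ := y
  constructor
  · intro h0
    rw [hasseG_eq, sub_eq_zero] at h0
    -- multiply by the denominator
    have key : hasseι (q.num • (1 : HasseProd)) = hasseι ((q.den : ℤ) • a) := by
      have hq1 : ((q.den : ℤ) : ℚ) * q = (q.num : ℚ) := by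
        have h := Rat.num_div_den q
        rw [div_eq_iff (by exact_mod_cast q.den_ne_zero : ((q.den : ℚ)) ≠ 0)] at h
        push_cast
        rw [mul_comm]
        exact h.symm
      rw [hasseι_apply, hasseι_apply, ← cast_tmul_one, TensorProduct.tmul_smul, ← h0,
        smul_tmul_one]
      congr 1
      rw [zsmul_eq_mul]
      exact hq1.symm
    have hcomp := hasseι_injective key
    have hcompp : ∀ p : Nat.Primes,
        ((q.num : @PadicInt p.1 ⟨p.2⟩)) = ((q.den : ℤ) : _) * a p := by
      intro p
      have := congrFun hcomp p
      simpa [zsmul_eq_mul] using this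
    have hden : q.den = 1 := by
      by_contra hden
      obtain ⟨pp, hpp, hdvd⟩ := Nat.exists_prime_and_dvd hden
      set P : Nat.Primes := ⟨pp, hpp⟩
      haveI : Fact pp.Prime := ⟨hpp⟩
      have h1 : ((pp : ℤ_[pp])) ∣ (q.num : ℤ_[pp]) := by
        refine dvd_trans ?_ ⟨a P, hcompp P⟩
        exact_mod_cast (Nat.cast_dvd_cast hdvd : (pp : ℤ_[pp]) ∣ (q.den : ℤ_[pp]))
      have h2 : (pp : ℤ) ∣ q.num := by
        rw [← PadicInt.norm_int_lt_one_iff_dvd]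
        obtain ⟨c, hc⟩ := h1
        have : ((q.num : ℤ) : ℤ_[pp]) = (pp : ℤ_[pp]) * c := by exact_mod_cast hc
        rw [this, norm_mul]
        calc ‖(pp : ℤ_[pp])‖ * ‖c‖ ≤ ‖(pp : ℤ_[pp])‖ * 1 := by
              exact mul_le_mul_of_nonneg_left (PadicInt.norm_le_one c) (norm_nonneg _)
          _ = ‖(pp : ℤ_[pp])‖ := mul_one _
          _ < 1 := by
              rw [PadicInt.norm_p]
              exact inv_lt_one_of_one_lt₀ (by exact_mod_cast hpp.one_lt)
      have h3 : pp ∣ q.num.natAbs := by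
        rwa [← Int.natAbs_natCast pp, Int.natAbs_dvd_natAbs]
      have := Nat.dvd_gcd h3 hdvd
      rw [Nat.Coprime.gcd_eq_one q.reduced] at this
      exact hpp.one_lt.ne' (Nat.dvd_one.mp this)
    have hq : (q.num : ℚ) = q := (Rat.den_eq_one_iff q).mp hden
    refine ⟨q.num, ?_⟩
    unfold hasseF
    refine Prod.ext hq ?_
    funext p
    have := hcompp p
    rw [hden] at this
    simpa using this
  · rintro ⟨n, hn⟩
    rw [← hn]
    show hasseG (hasseF n) = 0
    unfold hasseF
    rw [hasseG_eq]
    rw [sub_eq_zero, cast_tmul_one]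
    congr 1
    funext p
    simp [zsmul_eq_mul]

theorem hasseG_surjective : Function.Surjective hasseG := by
  intro x
  obtain ⟨⟨b, s⟩, rfl⟩ := IsLocalizedModule.mk'_surjective (nonZeroDivisors ℤ) hasseι x
  have hs0 : (s : ℤ) ≠ 0 := mem_nonZeroDivisors_iff_ne_zero.mp s.2
  have hn : (s : ℤ).natAbs ≠ 0 := Int.natAbs_ne_zero.mpr hs0
  obtain ⟨m, hm⟩ := hasse_crt (s : ℤ).natAbs hn b
  have hdvd : ∀ p : Nat.Primes,
      (((s : ℤ) : @PadicInt p.1 ⟨p.2⟩)) ∣ (m : _) - b p := by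
    intro p
    have h1 := hm p
    rcases Int.natAbs_eq (s : ℤ) with h | h
    · rw [h, Int.cast_natCast]; exact h1
    · rw [h, Int.cast_neg, Int.cast_natCast, neg_dvd]; exact h1
  choose a hA using fun p => exists_eq_mul_right_of_dvd (hdvd p)
  refine ⟨((m : ℚ) / ((s : ℤ) : ℚ), a), ?_⟩
  apply smul_injective_tensor (s : ℤ) hs0
  show (s : ℤ) • hasseG ((m : ℚ) / ((s : ℤ) : ℚ), a)
      = (s : ℤ) • IsLocalizedModule.mk' hasseι b s
  have hrhs : (s : ℤ) • IsLocalizedModule.mk' hasseι b s = hasseι b := by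
    have := IsLocalizedModule.mk'_cancel' hasseι b s
    rwa [Submonoid.smul_def] at this
  rw [hrhs, hasseG_eq, smul_sub, smul_tmul_one, ← TensorProduct.tmul_smul]
  have hq : (s : ℤ) • ((m : ℚ) / ((s : ℤ) : ℚ)) = (m : ℚ) := by
    rw [zsmul_eq_mul]
    have : ((s : ℤ) : ℚ) ≠ 0 := by exact_mod_cast hs0
    field_simp
  have hm' : ((m : ℕ) : ℚ) = (((m : ℕ) : ℤ) : ℚ) := by push_cast; ring
  rw [hq, hm', cast_tmul_one ((m : ℕ) : ℤ), hasseι_apply, ← TensorProduct.tmul_sub]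
  congr 1
  funext p
  haveI : Fact p.1.Prime := ⟨p.2⟩
  have h2 := hA p
  simp only [Pi.sub_apply, Pi.smul_apply, Pi.one_apply]
  rw [zsmul_eq_mul, zsmul_eq_mul, mul_one]
  push_cast
  linear_combination h2

theorem hasse_square_exact :
    Function.Injective hasseF ∧ Function.Exact hasseF hasseG ∧
      Function.Surjective hasseG := by
  refine ⟨?_, hasse_exact_mid, hasseG_surjective⟩
  intro x y h
  have h1 : ((x : ℚ), (fun _ => (x : _) : HasseProd)) = ((y : ℚ), (fun _ => (y : _) : HasseProd)) := h
  have h2 : (x : ℚ) = (y : ℚ) := congrArg Prod.fst h1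
  exact_mod_cast h2
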